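/- Let 𝓘 be a collection of nonempty finite subsets of ω₁ that is downwards closed, i.e., every nonempty subset of an element of 𝓘 belongs to 𝓘. Then there is a family {A_α : α < ω₁} of subsets of ℕ such that for every nonempty finite set I ⊆ ω₁: the intersection ⋂_{α ∈ I} A_α is infinite if and only if I ∈ 𝓘. -/

import Mathlib

open Cardinal Set Function
open scoped Classical

namespace Statement6

noncomputable section

/-- intersection of the family over a finite index set -/
def Cc (A : Ordinal.{0} → Set ℕ) (I : Finset Ordinal.{0}) : Set ℕ := ⋂ β ∈ I, A β

/-- union over a finite index set -/
def Uu (A : Ordinal.{0} → Set ℕ) (F : Finset Ordinal.{0}) : Set ℕ := ⋃ γ ∈ F, A γ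

def Xx (A : Ordinal.{0} → Set ℕ) (I F : Finset Ordinal.{0}) : Set ℕ := Cc A I \ Uu A F

/-- The invariant carried through the transfinite recursion. -/
def Inv (𝓘 : Set (Finset Ordinal.{0})) (A : Ordinal.{0} → Set ℕ) (α : Ordinal.{0}) : Prop :=
  (∀ I : Finset Ordinal.{0}, I.Nonempty → ↑I ⊆ Set.Iio α → I ∉ 𝓘 → (Cc A I).Finite) ∧
  (∀ I F : Finset Ordinal.{0}, (I = ∅ ∨ I ∈ 𝓘) → ↑I ⊆ Set.Iio α → ↑F ⊆ Set.Iio α →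
    (∀ γ ∈ F, γ ∉ I) → (Xx A I F).Infinite)

lemma Cc_congr {A A' : Ordinal → Set ℕ} {I : Finset Ordinal} (h : ∀ β ∈ I, A β = A' β) :
    Cc A I = Cc A' I := by
  unfold Cc
  exact Set.iInter₂_congr h

lemma Uu_congr {A A' : Ordinal → Set ℕ} {F : Finset Ordinal} (h : ∀ γ ∈ F, A γ = A' γ) :
    Uu A F = Uu A' F := by
  unfold Uu
  exact Set.iUnion₂_congr h

lemma Cc_empty (A : Ordinal → Set ℕ) : Cc A ∅ = Set.univ := by simp [Cc]

lemma Uu_empty (A : Ordinal → Set ℕ) : Uu A ∅ = ∅ := by simp [Uu]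

lemma Cc_insert (A : Ordinal → Set ℕ) (β : Ordinal) (I : Finset Ordinal) :
    Cc A (insert β I) = A β ∩ Cc A I := by
  simp [Cc, Set.biInter_insert]

lemma Uu_insert (A : Ordinal → Set ℕ) (γ : Ordinal) (F : Finset Ordinal) :
    Uu A (insert γ F) = A γ ∪ Uu A F := by
  simp [Uu, Set.biUnion_insert]

lemma Cc_subset {A : Ordinal → Set ℕ} {I : Finset Ordinal} {β : Ordinal} (h : β ∈ I) :
    Cc A I ⊆ A β := by
  intro x hx
  exact Set.mem_iInter₂.1 hx β h

lemma subset_Uu {A : Ordinal → Set ℕ} {F : Finset Ordinal} {γ : Ordinal} (h : γ ∈ F) :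
    A γ ⊆ Uu A F := by
  intro x hx
  exact Set.mem_iUnion₂.2 ⟨γ, h, hx⟩

lemma Uu_mono {A : Ordinal → Set ℕ} {F F' : Finset Ordinal} (h : F ⊆ F') :
    Uu A F ⊆ Uu A F' := by
  intro x hx
  obtain ⟨γ, hγ, hxγ⟩ := Set.mem_iUnion₂.1 hx
  exact Set.mem_iUnion₂.2 ⟨γ, h hγ, hxγ⟩

lemma Xx_anti {A : Ordinal → Set ℕ} {I F F' : Finset Ordinal} (h : F ⊆ F') :
    Xx A I F' ⊆ Xx A I F :=
  Set.diff_subset_diff_right (Uu_mono h)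

lemma Cc_update_notMem {A : Ordinal → Set ℕ} {α : Ordinal} {S : Set ℕ} {I : Finset Ordinal}
    (h : α ∉ I) : Cc (Function.update A α S) I = Cc A I := by
  refine (Cc_congr fun β hβ => ?_).symm
  have hne : β ≠ α := fun he => h (he ▸ hβ)
  exact (Function.update_of_ne hne _ _).symm

lemma Uu_update_notMem {A : Ordinal → Set ℕ} {α : Ordinal} {S : Set ℕ} {F : Finset Ordinal}
    (h : α ∉ F) : Uu (Function.update A α S) F = Uu A F := by
  refine (Uu_congr fun β hβ => ?_).symm
  have hne : β ≠ α := fun he => h (he ▸ hβ)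
  exact (Function.update_of_ne hne _ _).symm

lemma Cc_update_mem {A : Ordinal → Set ℕ} {α : Ordinal} {S : Set ℕ} {I : Finset Ordinal}
    (h : α ∈ I) : Cc (Function.update A α S) I = S ∩ Cc A (I.erase α) := by
  conv_lhs => rw [← Finset.insert_erase h]
  rw [Cc_insert, Function.update_self, Cc_update_notMem (Finset.notMem_erase _ _)]

lemma Uu_update_mem {A : Ordinal → Set ℕ} {α : Ordinal} {S : Set ℕ} {F : Finset Ordinal}
    (h : α ∈ F) : Uu (Function.update A α S) F = S ∪ Uu A (F.erase α) := by
  conv_lhs => rw [← Finset.insert_erase h]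
  rw [Uu_insert, Function.update_self, Uu_update_notMem (Finset.notMem_erase _ _)]

lemma infinite_of_unbounded {T : Set ℕ} (h : ∀ n : ℕ, ∃ m ∈ T, n < m) : T.Infinite := by
  intro hf
  obtain ⟨b, hb⟩ := hf.bddAbove
  obtain ⟨m, hm, hbm⟩ := h b
  exact absurd (hb hm) (not_le.2 hbm)

lemma Inv_congr {𝓘 : Set (Finset Ordinal)} {A A' : Ordinal → Set ℕ} {α : Ordinal}
    (h : ∀ β < α, A β = A' β) (hI : Inv 𝓘 A α) : Inv 𝓘 A' α := by
  constructor
  · intro I hne hsub hni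
    rw [← Cc_congr fun β hβ => h β (hsub hβ)]
    exact hI.1 I hne hsub hni
  · intro I F hIm hIs hFs hd
    have : Xx A I F = Xx A' I F := by
      unfold Xx
      rw [Cc_congr fun β hβ => h β (hIs hβ), Uu_congr fun γ hγ => h γ (hFs hγ)]
    rw [← this]
    exact hI.2 I F hIm hIs hFs hd

section Construction

variable (𝓘 : Set (Finset Ordinal.{0})) (α : Ordinal.{0}) (A : Ordinal.{0} → Set ℕ)
  (e : ℕ → Finset Ordinal.{0} × Finset Ordinal.{0})

/-- choice of an element of a set of naturals -/
def pick (Y : Set ℕ) : ℕ := if h : Y.Nonempty then h.choose else 0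

lemma pick_mem {Y : Set ℕ} (h : Y.Nonempty) : pick Y ∈ Y := by
  rw [pick, dif_pos h]
  exact h.choose_spec

/-- a canonical element of `J \ I` -/
def gam (J I : Finset Ordinal.{0}) : Ordinal :=
  if h : (J \ I).Nonempty then (J \ I).min' h else 0

/-- the finite set of "blockers" collected from the first `n` tasks -/
def Gg (n : ℕ) (I : Finset Ordinal.{0}) : Finset Ordinal :=
  ((Finset.range n).filter
      (fun m => insert α (e m).1 ∉ 𝓘 ∧ ((e m).1 ∈ 𝓘 ∨ (e m).1 = ∅))).image
    (fun m => gam (e m).1 I)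

def posCond (n : ℕ) : Prop := insert α (e n).1 ∈ 𝓘 ∧ ∀ γ ∈ (e n).2, γ ∉ (e n).1

def resCond (n : ℕ) : Prop := ((e n).1 = ∅ ∨ (e n).1 ∈ 𝓘) ∧ ∀ γ ∈ (e n).2, γ ∉ (e n).1

def posStep (n : ℕ) (sr : Finset ℕ × Finset ℕ) : Finset ℕ :=
  if posCond 𝓘 α e n then
    insert (pick (Xx A (e n).1 ((e n).2 ∪ Gg 𝓘 α e n (e n).1) \
      (↑sr.1 ∪ ↑sr.2 ∪ Set.Iic n))) sr.1
  else sr.1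

def resStep (n : ℕ) (sr : Finset ℕ × Finset ℕ) : Finset ℕ :=
  if resCond 𝓘 e n then
    insert (pick (Xx A (e n).1 (e n).2 \
      (↑(posStep 𝓘 α A e n sr) ∪ ↑sr.2 ∪ Set.Iic n))) sr.2
  else sr.2

def st : ℕ → Finset ℕ × Finset ℕ
  | 0 => (∅, ∅)
  | n + 1 => (posStep 𝓘 α A e n (st n), resStep 𝓘 α A e n (st n))

def Sbig : Set ℕ := ⋃ n, ↑(st 𝓘 α A e n).1

end Construction

lemma exists_step (𝓘 : Set (Finset Ordinal.{0}))
    (hdc : ∀ I ∈ 𝓘, ∀ J : Finset Ordinal.{0}, J ⊆ I → J.Nonempty → J ∈ 𝓘)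
    (α : Ordinal.{0}) (A : Ordinal.{0} → Set ℕ)
    (hcnt : (Set.Iio α).Countable) (hInv : Inv 𝓘 A α) :
    ∃ S : Set ℕ, Inv 𝓘 (Function.update A α S) (α + 1) := by
  have hlt : ∀ β : Ordinal, β < α + 1 ↔ β ≤ α := fun β => by
    rw [Ordinal.add_one_eq_succ, Order.lt_succ_iff]
  have hshrink : ∀ J : Finset Ordinal.{0}, ↑J ⊆ Set.Iio (α + 1) → α ∉ J →
      ↑J ⊆ Set.Iio α := by
    intro J hJ hα γ hγ
    have h1' := hJ hγ
    rw [Set.mem_Iio, hlt] at h1'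
    rw [Set.mem_Iio]
    refine lt_of_le_of_ne h1' fun h => hα ?_
    rw [← Finset.mem_coe, ← h]
    exact hγ
  have herase : ∀ F : Finset Ordinal.{0}, ↑F ⊆ Set.Iio (α + 1) →
      ↑(F.erase α) ⊆ Set.Iio α := by
    intro F hF γ hγ
    rw [Finset.mem_coe, Finset.mem_erase] at hγ
    have := hF hγ.2
    rw [Set.mem_Iio, hlt] at this
    exact lt_of_le_of_ne this hγ.1
  obtain ⟨h1, h2⟩ := hInv
  by_cases hIα : ({α} : Finset Ordinal.{0}) ∈ 𝓘
  · -- main case : `{α} ∈ 𝓘`, run the ω-length construction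
    -- countable enumeration of all pairs of finite subsets of `Iio α`, hitting
    -- every pair unboundedly often
    have hFc : {I : Finset Ordinal.{0} | ↑I ⊆ Set.Iio α}.Countable := by
      have hc := Set.countable_setOf_finite_subset hcnt
      have heq : {I : Finset Ordinal.{0} | ↑I ⊆ Set.Iio α} =
          (fun I : Finset Ordinal.{0} => (↑I : Set Ordinal)) ⁻¹'
            {t | t.Finite ∧ t ⊆ Set.Iio α} := by
        ext I
        simp only [Set.mem_setOf_eq, Set.mem_preimage]
        exact ⟨fun h => ⟨I.finite_toSet, h⟩, fun h => h.2⟩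
      rw [heq]
      exact hc.preimage Finset.coe_injective
    have hTc : {p : Finset Ordinal.{0} × Finset Ordinal.{0} |
        ↑p.1 ⊆ Set.Iio α ∧ ↑p.2 ⊆ Set.Iio α}.Countable := by
      refine Set.Countable.mono ?_ (hFc.prod hFc)
      intro p hp
      exact Set.mem_prod.2 hp
    haveI hT1 : Countable ↥{p : Finset Ordinal.{0} × Finset Ordinal.{0} |
        ↑p.1 ⊆ Set.Iio α ∧ ↑p.2 ⊆ Set.Iio α} := hTc.to_subtype
    haveI hT2 : Nonempty ↥{p : Finset Ordinal.{0} × Finset Ordinal.{0} |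
        ↑p.1 ⊆ Set.Iio α ∧ ↑p.2 ⊆ Set.Iio α} := ⟨⟨(∅, ∅), by simp⟩⟩
    obtain ⟨f, hf⟩ := exists_surjective_nat
      ↥{p : Finset Ordinal.{0} × Finset Ordinal.{0} |
        ↑p.1 ⊆ Set.Iio α ∧ ↑p.2 ⊆ Set.Iio α}
    set e : ℕ → Finset Ordinal.{0} × Finset Ordinal.{0} :=
      fun n => (f (Nat.unpair n).1).1 with he_def
    have he1 : ∀ n, ↑(e n).1 ⊆ Set.Iio α ∧ ↑(e n).2 ⊆ Set.Iio α :=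
      fun n => (f (Nat.unpair n).1).2
    have he2 : ∀ I F : Finset Ordinal.{0}, ↑I ⊆ Set.Iio α → ↑F ⊆ Set.Iio α →
        ∀ N : ℕ, ∃ n, N < n ∧ e n = (I, F) := by
      intro I F hI hF N
      obtain ⟨k, hk⟩ := hf ⟨(I, F), hI, hF⟩
      refine ⟨Nat.pair k (N + 1), ?_, ?_⟩
      · have := Nat.right_le_pair k (N + 1); omega
      · simp only [he_def, Nat.unpair_pair, hk]
    -- basic properties of the auxiliary choices
    have hgam : ∀ J I : Finset Ordinal.{0}, insert α I ∈ 𝓘 → (J ∈ 𝓘 ∨ J = ∅) →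
        insert α J ∉ 𝓘 → gam J I ∈ J ∧ gam J I ∉ I := by
      intro J I hins hJ hnJ
      have hne : (J \ I).Nonempty := by
        rw [Finset.sdiff_nonempty]
        intro hsub
        rcases hJ with hJ | rfl
        · exact hnJ (hdc (insert α I) hins (insert α J)
            (Finset.insert_subset_insert α hsub) ⟨α, Finset.mem_insert_self α J⟩)
        · exact hnJ (by simpa using hIα)
      rw [gam, dif_pos hne]
      have hm := Finset.min'_mem _ hne
      rw [Finset.mem_sdiff] at hm
      exact hm
    have hG : ∀ n (I : Finset Ordinal.{0}), insert α I ∈ 𝓘 →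
        ∀ γ ∈ Gg 𝓘 α e n I, γ < α ∧ γ ∉ I := by
      intro n I hins γ hγ
      rw [Gg, Finset.mem_image] at hγ
      obtain ⟨m, hm, rfl⟩ := hγ
      rw [Finset.mem_filter] at hm
      obtain ⟨-, hnJ, hJ⟩ := hm
      obtain ⟨hmem, hnotmem⟩ := hgam (e m).1 I hins hJ hnJ
      exact ⟨(he1 m).1 hmem, hnotmem⟩
    have hXpos : ∀ n, posCond 𝓘 α e n →
        (Xx A (e n).1 ((e n).2 ∪ Gg 𝓘 α e n (e n).1)).Infinite := by
      intro n hn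
      apply h2
      · rcases Finset.eq_empty_or_nonempty (e n).1 with h | h
        · exact Or.inl h
        · exact Or.inr (hdc _ hn.1 _ (Finset.subset_insert α _) h)
      · exact (he1 n).1
      · intro γ hγ
        rw [Finset.coe_union, Set.mem_union] at hγ
        rcases hγ with hγ | hγ
        · exact (he1 n).2 hγ
        · exact Set.mem_Iio.2 (hG n (e n).1 hn.1 γ hγ).1
      · intro γ hγ
        rw [Finset.mem_union] at hγ
        rcases hγ with hγ | hγ
        · exact hn.2 γ hγ
        · exact (hG n (e n).1 hn.1 γ hγ).2
    have hfin : ∀ (s1 s2 : Finset ℕ) (n : ℕ),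
        (↑s1 ∪ ↑s2 ∪ Set.Iic n : Set ℕ).Finite :=
      fun s1 s2 n => (s1.finite_toSet.union s2.finite_toSet).union (Set.finite_Iic n)
    -- the point possibly added to the first component at step n
    set xval : ℕ → ℕ := fun n => pick (Xx A (e n).1 ((e n).2 ∪ Gg 𝓘 α e n (e n).1) \
      (↑(st 𝓘 α A e n).1 ∪ ↑(st 𝓘 α A e n).2 ∪ Set.Iic n)) with hxval_def
    set yval : ℕ → ℕ := fun n => pick (Xx A (e n).1 (e n).2 \
      (↑(st 𝓘 α A e (n + 1)).1 ∪ ↑(st 𝓘 α A e n).2 ∪ Set.Iic n)) with hyval_def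
    have hsucc1 : ∀ n, (st 𝓘 α A e (n + 1)).1 =
        if posCond 𝓘 α e n then insert (xval n) (st 𝓘 α A e n).1
        else (st 𝓘 α A e n).1 := fun n => rfl
    have hsucc2 : ∀ n, (st 𝓘 α A e (n + 1)).2 =
        if resCond 𝓘 e n then insert (yval n) (st 𝓘 α A e n).2
        else (st 𝓘 α A e n).2 := fun n => rfl
    have hxprop : ∀ n, posCond 𝓘 α e n →
        xval n ∈ Xx A (e n).1 ((e n).2 ∪ Gg 𝓘 α e n (e n).1) ∧
        xval n ∉ (st 𝓘 α A e n).1 ∧ xval n ∉ (st 𝓘 α A e n).2 ∧ n < xval n := by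
      intro n hn
      have hmem := pick_mem (Y := Xx A (e n).1 ((e n).2 ∪ Gg 𝓘 α e n (e n).1) \
          (↑(st 𝓘 α A e n).1 ∪ ↑(st 𝓘 α A e n).2 ∪ Set.Iic n))
        (((hXpos n hn).diff (hfin (st 𝓘 α A e n).1 (st 𝓘 α A e n).2 n)).nonempty)
      rw [Set.mem_diff] at hmem
      obtain ⟨hz1, hz2⟩ := hmem
      simp only [Set.mem_union, Finset.mem_coe, Set.mem_Iic, not_or, not_le] at hz2
      exact ⟨hz1, hz2.1.1, hz2.1.2, hz2.2⟩
    have hyprop : ∀ n, resCond 𝓘 e n →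
        yval n ∈ Xx A (e n).1 (e n).2 ∧
        yval n ∉ (st 𝓘 α A e (n + 1)).1 ∧ yval n ∉ (st 𝓘 α A e n).2 ∧ n < yval n := by
      intro n hn
      have hXr : (Xx A (e n).1 (e n).2).Infinite :=
        h2 _ _ hn.1 (he1 n).1 (he1 n).2 hn.2
      have hmem := pick_mem (Y := Xx A (e n).1 (e n).2 \
          (↑(st 𝓘 α A e (n + 1)).1 ∪ ↑(st 𝓘 α A e n).2 ∪ Set.Iic n))
        ((hXr.diff (hfin (st 𝓘 α A e (n + 1)).1 (st 𝓘 α A e n).2 n)).nonempty)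
      rw [Set.mem_diff] at hmem
      obtain ⟨hz1, hz2⟩ := hmem
      simp only [Set.mem_union, Finset.mem_coe, Set.mem_Iic, not_or, not_le] at hz2
      exact ⟨hz1, hz2.1.1, hz2.1.2, hz2.2⟩
    -- monotonicity
    have hm1 : ∀ n, (st 𝓘 α A e n).1 ⊆ (st 𝓘 α A e (n + 1)).1 := by
      intro n
      rw [hsucc1 n]
      split
      · exact Finset.subset_insert _ _
      · exact Finset.Subset.refl _
    have hm2 : ∀ n, (st 𝓘 α A e n).2 ⊆ (st 𝓘 α A e (n + 1)).2 := by
      intro n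
      rw [hsucc2 n]
      split
      · exact Finset.subset_insert _ _
      · exact Finset.Subset.refl _
    have hmono1 : ∀ m n, m ≤ n → (st 𝓘 α A e m).1 ⊆ (st 𝓘 α A e n).1 := by
      intro m n hmn
      induction hmn with
      | refl => exact Finset.Subset.refl _
      | step h ih => exact ih.trans (hm1 _)
    have hmono2 : ∀ m n, m ≤ n → (st 𝓘 α A e m).2 ⊆ (st 𝓘 α A e n).2 := by
      intro m n hmn
      induction hmn with
      | refl => exact Finset.Subset.refl _
      | step h ih => exact ih.trans (hm2 _)
    -- the two components stay disjoint
    have hdisj : ∀ n, ∀ x ∈ (st 𝓘 α A e n).1, x ∉ (st 𝓘 α A e n).2 := by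
      intro n
      induction n with
      | zero => intro x hx; simp [st] at hx
      | succ n ih =>
        intro x hx hx2
        have hcore : x ∈ (st 𝓘 α A e n).2 → False := by
          intro hx2'
          rw [hsucc1 n] at hx
          by_cases hp : posCond 𝓘 α e n
          · rw [if_pos hp, Finset.mem_insert] at hx
            rcases hx with rfl | hx
            · exact (hxprop n hp).2.2.1 hx2'
            · exact ih x hx hx2'
          · rw [if_neg hp] at hx
            exact ih x hx hx2'
        rw [hsucc2 n] at hx2
        by_cases hr : resCond 𝓘 e n
        · rw [if_pos hr, Finset.mem_insert] at hx2
          rcases hx2 with rfl | hx2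
          · exact (hyprop n hr).2.1 hx
          · exact hcore hx2
        · rw [if_neg hr] at hx2
          exact hcore hx2
    have hSr : ∀ x, x ∈ Sbig 𝓘 α A e → ∀ m, x ∉ (st 𝓘 α A e m).2 := by
      intro x hx m hxm
      rw [Sbig, Set.mem_iUnion] at hx
      obtain ⟨n, hn⟩ := hx
      exact hdisj (max n m) x (hmono1 n (max n m) (le_max_left _ _) hn)
        (hmono2 m (max n m) (le_max_right _ _) hxm)
    -- the three key properties of `Sbig`
    have hposS : ∀ I F : Finset Ordinal.{0}, insert α I ∈ 𝓘 → ↑I ⊆ Set.Iio α →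
        ↑F ⊆ Set.Iio α → (∀ γ ∈ F, γ ∉ I) →
        (Sbig 𝓘 α A e ∩ Xx A I F).Infinite := by
      intro I F hins hIs hFs hd
      apply infinite_of_unbounded
      intro N
      obtain ⟨n, hNn, hen⟩ := he2 I F hIs hFs N
      have heI : (e n).1 = I := by rw [hen]
      have heF : (e n).2 = F := by rw [hen]
      have hpc : posCond 𝓘 α e n := by
        rw [posCond, heI, heF]
        exact ⟨hins, hd⟩
      refine ⟨xval n, ⟨?_, ?_⟩, ?_⟩
      · rw [Sbig, Set.mem_iUnion]
        refine ⟨n + 1, ?_⟩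
        rw [hsucc1 n, if_pos hpc]
        exact Finset.mem_insert_self _ _
      · have h' := (hxprop n hpc).1
        rw [heI, heF] at h'
        exact Xx_anti Finset.subset_union_left h'
      · exact lt_trans hNn (hxprop n hpc).2.2.2
    have hresS : ∀ I F : Finset Ordinal.{0}, (I = ∅ ∨ I ∈ 𝓘) → ↑I ⊆ Set.Iio α →
        ↑F ⊆ Set.Iio α → (∀ γ ∈ F, γ ∉ I) →
        (Xx A I F \ Sbig 𝓘 α A e).Infinite := by
      intro I F hIm hIs hFs hd
      apply infinite_of_unbounded
      intro N
      obtain ⟨n, hNn, hen⟩ := he2 I F hIs hFs N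
      have heI : (e n).1 = I := by rw [hen]
      have heF : (e n).2 = F := by rw [hen]
      have hrc : resCond 𝓘 e n := by
        rw [resCond, heI, heF]
        exact ⟨hIm, hd⟩
      have hy := hyprop n hrc
      refine ⟨yval n, ⟨?_, ?_⟩, ?_⟩
      · have h' := hy.1
        rw [heI, heF] at h'
        exact h'
      · intro hyS
        refine hSr (yval n) hyS (n + 1) ?_
        rw [hsucc2 n, if_pos hrc]
        exact Finset.mem_insert_self _ _
      · exact lt_trans hNn hy.2.2.2
    have hnegS : ∀ J : Finset Ordinal.{0}, ↑J ⊆ Set.Iio α → (J ∈ 𝓘 ∨ J = ∅) →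
        insert α J ∉ 𝓘 → (Sbig 𝓘 α A e ∩ Cc A J).Finite := by
      intro J hJs hJ hnJ
      obtain ⟨m₀, -, hem⟩ := he2 J ∅ hJs (by simp) 0
      have heJ : (e m₀).1 = J := by rw [hem]
      have key : ∀ n, ∀ x ∈ (st 𝓘 α A e n).1, x ∈ Cc A J →
          x ∈ (st 𝓘 α A e (m₀ + 1)).1 := by
        intro n
        induction n with
        | zero => intro x hx _; simp [st] at hx
        | succ n ih =>
          intro x hx hxC
          by_cases hmn : n + 1 ≤ m₀ + 1
          · exact hmono1 _ _ hmn hx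
          · push_neg at hmn
            rw [hsucc1 n] at hx
            by_cases hp : posCond 𝓘 α e n
            · rw [if_pos hp, Finset.mem_insert] at hx
              rcases hx with rfl | hx
              · exfalso
                have hγ : gam J (e n).1 ∈ Gg 𝓘 α e n (e n).1 := by
                  rw [Gg, Finset.mem_image]
                  refine ⟨m₀, ?_, by rw [heJ]⟩
                  rw [Finset.mem_filter, Finset.mem_range, heJ]
                  exact ⟨by omega, hnJ, hJ⟩
                have hg := hgam J (e n).1 hp.1 hJ hnJ
                have hx1 : xval n ∈ A (gam J (e n).1) := Cc_subset hg.1 hxC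
                exact (hxprop n hp).1.2
                  (subset_Uu (Finset.mem_union_right _ hγ) hx1)
              · exact ih x hx hxC
            · rw [if_neg hp] at hx
              exact ih x hx hxC
      refine Set.Finite.subset (st 𝓘 α A e (m₀ + 1)).1.finite_toSet ?_
      rintro x ⟨hxS, hxC⟩
      rw [Sbig, Set.mem_iUnion] at hxS
      obtain ⟨n, hn⟩ := hxS
      exact key n x hn hxC
    -- assemble the invariant for the extended family
    refine ⟨Sbig 𝓘 α A e, ?_, ?_⟩
    · intro I hne hsub hni
      by_cases hαI : α ∈ I
      · rw [Cc_update_mem hαI]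
        have hJs : ↑(I.erase α) ⊆ Set.Iio α := herase I hsub
        have hins : insert α (I.erase α) = I := Finset.insert_erase hαI
        by_cases hJ2 : I.erase α ∈ 𝓘 ∨ I.erase α = ∅
        · exact hnegS (I.erase α) hJs hJ2 (by rw [hins]; exact hni)
        · push_neg at hJ2
          have hfinJ := h1 (I.erase α) hJ2.2 hJs hJ2.1
          exact hfinJ.inter_of_right _
      · rw [Cc_update_notMem hαI]
        exact h1 I hne (hshrink I hsub hαI) hni
    · intro I F hIm hIs hFs hd
      by_cases hαI : α ∈ I
      · have hIin : I ∈ 𝓘 := by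
          rcases hIm with rfl | h
          · simp at hαI
          · exact h
        have hins : insert α (I.erase α) = I := Finset.insert_erase hαI
        have hαF : α ∉ F := fun hc => hd α hc hαI
        have hIs' : ↑(I.erase α) ⊆ Set.Iio α := herase I hIs
        have hFs' : ↑F ⊆ Set.Iio α := hshrink F hFs hαF
        have heq : Xx (Function.update A α (Sbig 𝓘 α A e)) I F =
            Sbig 𝓘 α A e ∩ Xx A (I.erase α) F := by
          unfold Xx
          rw [Cc_update_mem hαI, Uu_update_notMem hαF, Set.inter_diff_assoc]
        rw [heq]
        exact hposS (I.erase α) F (by rw [hins]; exact hIin) hIs' hFs'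
          fun γ hγ hc => hd γ hγ (Finset.mem_of_mem_erase hc)
      · have hIs' : ↑I ⊆ Set.Iio α := hshrink I hIs hαI
        by_cases hαF : α ∈ F
        · have heq : Xx (Function.update A α (Sbig 𝓘 α A e)) I F =
              Xx A I (F.erase α) \ Sbig 𝓘 α A e := by
            unfold Xx
            rw [Cc_update_notMem hαI, Uu_update_mem hαF, Set.diff_diff,
              Set.union_comm]
          rw [heq]
          exact hresS I (F.erase α) hIm hIs' (herase F hFs)
            fun γ hγ => hd γ (Finset.mem_of_mem_erase hγ)
        · have heq : Xx (Function.update A α (Sbig 𝓘 α A e)) I F = Xx A I F := by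
            unfold Xx
            rw [Cc_update_notMem hαI, Uu_update_notMem hαF]
          rw [heq]
          exact h2 I F hIm hIs' (hshrink F hFs hαF) hd

  · -- trivial case : take `∅`
    refine ⟨∅, ?_, ?_⟩
    · intro I hne hsub hni
      by_cases hαI : α ∈ I
      · have hC := Cc_subset (A := Function.update A α ∅) hαI
        rw [Function.update_self] at hC
        exact Set.Finite.subset (Set.finite_empty) hC
      · rw [Cc_update_notMem hαI]
        exact h1 I hne (hshrink I hsub hαI) hni
    · intro I F hIm hIs hFs hd
      have hαI : α ∉ I := by
        intro hαI
        rcases hIm with rfl | hIm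
        · simp at hαI
        · exact hIα (hdc I hIm {α} (Finset.singleton_subset_iff.2 hαI)
            ⟨α, Finset.mem_singleton_self α⟩)
      have hIs' : ↑I ⊆ Set.Iio α := hshrink I hIs hαI
      by_cases hαF : α ∈ F
      · have heq : Xx (Function.update A α ∅) I F = Xx A I (F.erase α) := by
          unfold Xx
          rw [Cc_update_notMem hαI, Uu_update_mem hαF, Set.empty_union]
        rw [heq]
        exact h2 I (F.erase α) hIm hIs' (herase F hFs)
          fun γ hγ => hd γ (Finset.mem_of_mem_erase hγ)
      · have heq : Xx (Function.update A α ∅) I F = Xx A I F := by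
          unfold Xx
          rw [Cc_update_notMem hαI, Uu_update_notMem hαF]
        rw [heq]
        exact h2 I F hIm hIs' (hshrink F hFs hαF) hd

/-- the set chosen at stage `α`, given the previously constructed family `B` -/
def nextSet (𝓘 : Set (Finset Ordinal.{0})) (α : Ordinal.{0}) (B : Ordinal.{0} → Set ℕ) :
    Set ℕ :=
  if h : ∃ S : Set ℕ, Inv 𝓘 (Function.update B α S) (α + 1) then h.choose else ∅

/-- the family, by transfinite recursion -/
def fam (𝓘 : Set (Finset Ordinal.{0})) : Ordinal.{0} → Set ℕ :=
  Ordinal.lt_wf.fix fun α rec =>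
    nextSet 𝓘 α fun β => if h : β < α then rec β h else ∅

lemma fam_eq (𝓘 : Set (Finset Ordinal.{0})) (α : Ordinal.{0}) :
    fam 𝓘 α = nextSet 𝓘 α fun β => if β < α then fam 𝓘 β else ∅ := by
  rw [fam, WellFounded.fix_eq]
  rfl

lemma iio_countable {β : Ordinal.{0}} (hβ : β < (Cardinal.aleph 1).ord) :
    (Set.Iio β).Countable := by
  have hcard : β.card < Cardinal.aleph 1 := Cardinal.lt_ord.1 hβ
  have h0 : β.card ≤ Cardinal.aleph0 := by
    rwa [← Cardinal.succ_aleph0, Order.lt_succ_iff] at hcard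
  rw [← Set.countable_coe_iff, ← Cardinal.mk_le_aleph0_iff, Ordinal.mk_Iio_ordinal,
    ← Cardinal.lift_aleph0.{1, 0}, Cardinal.lift_le]
  exact h0

lemma inv_succ (𝓘 : Set (Finset Ordinal.{0}))
    (hdc : ∀ I ∈ 𝓘, ∀ J : Finset Ordinal.{0}, J ⊆ I → J.Nonempty → J ∈ 𝓘) :
    ∀ β : Ordinal.{0}, β < (Cardinal.aleph 1).ord → Inv 𝓘 (fam 𝓘) (β + 1) := by
  intro β
  induction β using Ordinal.induction with
  | h β IH =>
    intro hβ
    have hlt : ∀ γ δ : Ordinal.{0}, γ < δ + 1 ↔ γ ≤ δ := fun γ δ => by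
      rw [Ordinal.add_one_eq_succ, Order.lt_succ_iff]
    -- first : the invariant holds at β
    have hInvβ : Inv 𝓘 (fam 𝓘) β := by
      constructor
      · intro I hne hsub hni
        have hγ0 : I.max' hne ∈ I := I.max'_mem hne
        have hγβ : I.max' hne < β := hsub hγ0
        have hsub' : ↑I ⊆ Set.Iio (I.max' hne + 1) := by
          intro δ hδ
          rw [Set.mem_Iio, hlt]
          exact I.le_max' δ hδ
        exact (IH _ hγβ (hγβ.trans hβ)).1 I hne hsub' hni
      · intro I F hIm hIs hFs hd
        rcases Finset.eq_empty_or_nonempty (I ∪ F) with hIF | hIF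
        · rw [Finset.union_eq_empty] at hIF
          obtain ⟨rfl, rfl⟩ := hIF
          have : Xx (fam 𝓘) ∅ ∅ = Set.univ := by
            rw [Xx, Cc_empty, Uu_empty, Set.diff_empty]
          rw [this]
          exact Set.infinite_univ
        · set γ0 := (I ∪ F).max' hIF with hγ0_def
          have hγβ : γ0 < β := by
            have := (I ∪ F).max'_mem hIF
            rw [Finset.mem_union] at this
            rcases this with h | h
            · exact hIs h
            · exact hFs h
          have hgen : ∀ δ ∈ I ∪ F, δ < γ0 + 1 := by
            intro δ hδ
            rw [hlt]
            exact (I ∪ F).le_max' δ hδ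
          refine (IH γ0 hγβ (hγβ.trans hβ)).2 I F hIm ?_ ?_ hd
          · exact fun δ hδ => hgen δ (Finset.mem_union_left _ hδ)
          · exact fun δ hδ => hgen δ (Finset.mem_union_right _ hδ)
    -- transfer to the truncated family and apply the step lemma
    have hInvB : Inv 𝓘 (fun γ => if γ < β then fam 𝓘 γ else ∅) β :=
      Inv_congr (fun γ hγ => (if_pos hγ).symm) hInvβ
    have hex : ∃ S : Set ℕ,
        Inv 𝓘 (Function.update (fun γ => if γ < β then fam 𝓘 γ else ∅) β S) (β + 1) :=
      exists_step 𝓘 hdc β _ (iio_countable hβ) hInvB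
    have hfamβ : Inv 𝓘
        (Function.update (fun γ => if γ < β then fam 𝓘 γ else ∅) β (fam 𝓘 β)) (β + 1) := by
      rw [fam_eq 𝓘 β, nextSet, dif_pos hex]
      exact hex.choose_spec
    refine Inv_congr (fun γ hγ => ?_) hfamβ
    rcases eq_or_ne γ β with rfl | hne
    · rw [Function.update_self]
    · rw [Function.update_of_ne hne]
      have : γ < β := lt_of_le_of_ne ((hlt γ β).1 hγ) hne
      rw [if_pos this]

end
end Statement6

/-- If `𝓘` is a downwards closed collection of nonempty finite subsets of `ω₁`,
then there is a family `⟨A_α : α < ω₁⟩` of subsets of `ℕ` such that for every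
nonempty finite `I ⊆ ω₁`, the intersection `⋂_{α ∈ I} A_α` is infinite iff `I ∈ 𝓘`. -/
theorem statement_6 (𝓘 : Set (Finset Ordinal.{0}))
    (h𝓘 : ∀ I ∈ 𝓘, I.Nonempty ∧ (I : Set Ordinal) ⊆ Set.Iio (Cardinal.aleph 1).ord)
    (hdc : ∀ I ∈ 𝓘, ∀ J : Finset Ordinal.{0}, J ⊆ I → J.Nonempty → J ∈ 𝓘) :
    ∃ A : Ordinal.{0} → Set ℕ,
      ∀ I : Finset Ordinal.{0}, I.Nonempty →
        (I : Set Ordinal) ⊆ Set.Iio (Cardinal.aleph 1).ord →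
        ((⋂ α ∈ I, A α).Infinite ↔ I ∈ 𝓘) := by
  refine ⟨Statement6.fam 𝓘, ?_⟩
  intro I hne hsub
  have hγβ : I.max' hne < (Cardinal.aleph 1).ord := hsub (I.max'_mem hne)
  have hInv := Statement6.inv_succ 𝓘 hdc (I.max' hne) hγβ
  have hsub' : (I : Set Ordinal) ⊆ Set.Iio (I.max' hne + 1) := by
    intro δ hδ
    rw [Set.mem_Iio, Ordinal.add_one_eq_succ, Order.lt_succ_iff]
    exact I.le_max' δ hδ
  have hCc : Statement6.Cc (Statement6.fam 𝓘) I = ⋂ α ∈ I, Statement6.fam 𝓘 α := rfl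
  constructor
  · intro hinf
    by_contra hni
    rw [← hCc] at hinf
    exact hinf (hInv.1 I hne hsub' hni)
  · intro hi
    have hX := hInv.2 I ∅ (Or.inr hi) hsub' (by simp) (by simp)
    rw [Statement6.Xx, Statement6.Uu_empty, Set.diff_empty, hCc] at hX
    exact hX
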